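/- Shapley–Folkman (classical form): let A_1, …, A_n ⊆ ℝ^d be non-empty compact sets. For every x ∈ conv(A_1) + ⋯ + conv(A_n) there exists a subset I ⊆ {1, …, n} with |I| ≤ d such that x ∈ Σ_{i∉I} A_i + Σ_{i∈I} conv(A_i). -/
import Mathlib


open Pointwise

private lemma sf_key {d n : ℕ} (A : Fin n → Set (EuclideanSpace ℝ (Fin d)))
    (N : ℕ) (s : Fin n → Finset (EuclideanSpace ℝ (Fin d)))
    (w : Fin n → EuclideanSpace ℝ (Fin d) → ℝ)
    (hN : (∑ i, (s i).card) = N)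
    (hsub : ∀ i, ↑(s i) ⊆ A i)
    (hpos : ∀ i, ∀ a ∈ s i, 0 < w i a)
    (hsum : ∀ i, ∑ a ∈ s i, w i a = 1) :
    ∃ I : Finset (Fin n), I.card ≤ d ∧
      (∑ i, ∑ a ∈ s i, w i a • a) ∈ (∑ i ∈ Iᶜ, A i) + ∑ i ∈ I, convexHull ℝ (A i) := by
  classical
  induction N using Nat.strong_induction_on generalizing s w with
  | _ N IH =>
  set T : Finset (Fin n) := Finset.univ.filter (fun i => 2 ≤ (s i).card) with hT
  have hsne : ∀ i, (s i).Nonempty := by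
    intro i
    rcases Finset.eq_empty_or_nonempty (s i) with h | h
    · exfalso; have := hsum i; rw [h] at this; simp at this
    · exact h
  by_cases hcard : T.card ≤ d
  · refine ⟨T, hcard, ?_⟩
    rw [← Finset.sum_compl_add_sum T (fun i => ∑ a ∈ s i, w i a • a)]
    refine Set.add_mem_add ?_ ?_
    · refine Set.finset_sum_mem_finset_sum _ _ _ ?_
      intro i hi
      have hle : (s i).card ≤ 1 := by
        by_contra h
        exact (Finset.mem_compl.mp hi) (Finset.mem_filter.mpr ⟨Finset.mem_univ i, by omega⟩)
      have h1 : (s i).card = 1 := le_antisymm hle (Finset.card_pos.mpr (hsne i))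
      obtain ⟨a, ha⟩ := Finset.card_eq_one.mp h1
      have hw1 : w i a = 1 := by have := hsum i; rwa [ha, Finset.sum_singleton] at this
      rw [ha, Finset.sum_singleton, hw1, one_smul]
      exact hsub i (by rw [ha]; simp)
    · refine Set.finset_sum_mem_finset_sum _ _ _ ?_
      intro i _
      refine convexHull_mono (hsub i) ?_
      exact Finset.mem_convexHull'.mpr ⟨w i, fun y hy => (hpos i y hy).le, hsum i, rfl⟩
  · push_neg at hcard
    -- choose two distinct points in s i for i ∈ T
    have hab : ∀ i : Fin n, ∃ p : EuclideanSpace ℝ (Fin d) × EuclideanSpace ℝ (Fin d),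
        p.1 ∈ s i ∧ p.2 ∈ s i ∧ (i ∈ T → p.1 ≠ p.2) := by
      intro i
      by_cases hi : i ∈ T
      · obtain ⟨a, ha, b, hb, hne⟩ :=
          Finset.one_lt_card.mp (lt_of_lt_of_le one_lt_two (Finset.mem_filter.mp hi).2)
        exact ⟨(a, b), ha, hb, fun _ => hne⟩
      · obtain ⟨a, ha⟩ := hsne i
        exact ⟨(a, a), ha, ha, fun h => absurd h hi⟩
    choose p hp1 hp2 hp3 using hab
    set a : Fin n → EuclideanSpace ℝ (Fin d) := fun i => (p i).1 with ha_def
    set b : Fin n → EuclideanSpace ℝ (Fin d) := fun i => (p i).2 with hb_def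
    -- linear dependence
    have hdep : ¬ LinearIndependent ℝ (fun i : {i // i ∈ T} => a i.1 - b i.1) := by
      intro h
      have := h.fintype_card_le_finrank
      rw [Fintype.card_coe, finrank_euclideanSpace_fin] at this
      omega
    obtain ⟨g, hg0, j₀, hj₀⟩ := Fintype.not_linearIndependent_iff.mp hdep
    set c : Fin n → ℝ := fun i => if h : i ∈ T then g ⟨i, h⟩ else 0 with hc_def
    have hcT : ∀ i ∉ T, c i = 0 := fun i hi => dif_neg hi
    have hcsum : ∑ i, c i • (a i - b i) = 0 := by
      rw [← Finset.sum_subset (Finset.subset_univ T)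
        (fun i _ hi => by rw [hcT i hi, zero_smul])]
      rw [← Finset.sum_coe_sort T]
      rw [← hg0]
      exact Finset.sum_congr rfl fun i _ => by
        simp only [hc_def, dif_pos i.2]
    set P : Finset (Fin n) := T.filter (fun i => c i ≠ 0) with hP
    have hPne : P.Nonempty := by
      refine ⟨j₀.1, Finset.mem_filter.mpr ⟨j₀.2, ?_⟩⟩
      simpa only [hc_def, dif_pos j₀.2] using hj₀
    set r : Fin n → ℝ := fun i => if 0 < c i then w i (b i) / c i else w i (a i) / (-(c i))
      with hr_def
    set t : ℝ := P.inf' hPne r with ht_def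
    have ht_le : ∀ i ∈ P, t ≤ r i := fun i hi => Finset.inf'_le r hi
    obtain ⟨i₀, hi₀P, hti₀⟩ := Finset.exists_mem_eq_inf' hPne r
    have hi₀T : i₀ ∈ T := (Finset.mem_filter.mp hi₀P).1
    have hci₀ : c i₀ ≠ 0 := (Finset.mem_filter.mp hi₀P).2
    have ht_pos : 0 < t := by
      rw [ht_def, hti₀]
      by_cases h : 0 < c i₀
      · rw [hr_def]; simp only [if_pos h]
        exact div_pos (hpos i₀ _ (hp2 i₀)) h
      · rw [hr_def]; simp only [if_neg h]
        refine div_pos (hpos i₀ _ (hp1 i₀)) ?_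
        rcases lt_or_eq_of_le (not_lt.mp h) with h' | h'
        · linarith
        · exact absurd h' hci₀
    set δ : Fin n → EuclideanSpace ℝ (Fin d) → ℝ := fun i x =>
      (if x = a i then t * c i else 0) - (if x = b i then t * c i else 0) with hδ_def
    set w' : Fin n → EuclideanSpace ℝ (Fin d) → ℝ := fun i x => w i x + δ i x with hw'_def
    -- c i ≠ 0 implies i ∈ P
    have hmemP : ∀ i, c i ≠ 0 → i ∈ P := by
      intro i hci
      refine Finset.mem_filter.mpr ⟨?_, hci⟩
      by_contra h
      exact hci (hcT i h)
    -- nonnegativity of w'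
    have hw'0 : ∀ i, ∀ x ∈ s i, 0 ≤ w' i x := by
      intro i x hx
      simp only [hw'_def, hδ_def]
      by_cases hxa : x = a i <;> by_cases hxb : x = b i
      · simp only [if_pos hxa, if_pos hxb]
        have := hpos i x hx; linarith
      · simp only [if_pos hxa, if_neg hxb, sub_zero]
        rcases le_or_gt 0 (c i) with hc | hc
        · have := hpos i x hx
          have : 0 ≤ t * c i := mul_nonneg ht_pos.le hc
          have := hpos i x hx; linarith
        · have hiP : i ∈ P := hmemP i (ne_of_lt hc)
          have hle := ht_le i hiP
          rw [hr_def] at hle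
          simp only [if_neg (not_lt.mpr hc.le)] at hle
          have hnc : 0 < -c i := by linarith
          have : t * (-c i) ≤ w i (a i) := (le_div_iff₀ hnc).mp hle
          rw [hxa]; nlinarith
      · simp only [if_neg hxa, if_pos hxb, zero_sub]
        rcases le_or_gt (c i) 0 with hc | hc
        · have h1 : t * c i ≤ 0 := mul_nonpos_of_nonneg_of_nonpos ht_pos.le hc
          have := hpos i x hx; linarith
        · have hiP : i ∈ P := hmemP i (ne_of_gt hc)
          have hle := ht_le i hiP
          rw [hr_def] at hle
          simp only [if_pos hc] at hle
          have : t * c i ≤ w i (b i) := (le_div_iff₀ hc).mp hle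
          rw [hxb]; linarith
      · simp only [if_neg hxa, if_neg hxb, sub_zero, add_zero]
        exact (hpos i x hx).le
    -- a point of s i₀ gets weight zero
    have hzero : ∃ y ∈ s i₀, w' i₀ y = 0 := by
      have hne : a i₀ ≠ b i₀ := hp3 i₀ hi₀T
      rcases lt_or_gt_of_ne hci₀ with hc | hc
      · refine ⟨a i₀, hp1 i₀, ?_⟩
        simp only [hw'_def, hδ_def, if_pos rfl, if_neg hne, sub_zero, if_true]
        have htv : t = w i₀ (a i₀) / -c i₀ := by
          rw [ht_def, hti₀, hr_def]; simp only [if_neg (not_lt.mpr hc.le)]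
        rw [htv, div_mul_eq_mul_div, div_neg, mul_div_cancel_right₀ _ hci₀]
        ring
      · refine ⟨b i₀, hp2 i₀, ?_⟩
        simp only [hw'_def, hδ_def, if_neg (Ne.symm hne), if_pos rfl, zero_sub, if_true]
        have htv : t = w i₀ (b i₀) / c i₀ := by
          rw [ht_def, hti₀, hr_def]; simp only [if_pos hc]
        rw [htv, div_mul_cancel₀ _ hci₀]
        ring
    obtain ⟨y₀, hy₀s, hy₀⟩ := hzero
    set s' : Fin n → Finset (EuclideanSpace ℝ (Fin d)) :=
      fun i => (s i).filter (fun x => w' i x ≠ 0) with hs'_def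
    have hs'sub : ∀ i, s' i ⊆ s i := fun i => Finset.filter_subset _ _
    have hpos' : ∀ i, ∀ x ∈ s' i, 0 < w' i x := by
      intro i x hx
      obtain ⟨hxs, hxne⟩ := Finset.mem_filter.mp hx
      exact lt_of_le_of_ne (hw'0 i x hxs) (Ne.symm hxne)
    -- sums of δ
    have hδsum : ∀ i, ∑ x ∈ s i, δ i x = 0 := by
      intro i
      simp only [hδ_def, Finset.sum_sub_distrib]
      rw [Finset.sum_ite_eq' (s i) (a i) (fun _ => t * c i),
        Finset.sum_ite_eq' (s i) (b i) (fun _ => t * c i),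
        if_pos (hp1 i), if_pos (hp2 i), sub_self]
    have hδvec : ∀ i, ∑ x ∈ s i, δ i x • x = (t * c i) • (a i - b i) := by
      intro i
      simp only [hδ_def, sub_smul, Finset.sum_sub_distrib, ite_smul, zero_smul]
      rw [Finset.sum_ite_eq' (s i) (a i) (fun x => (t * c i) • x),
        Finset.sum_ite_eq' (s i) (b i) (fun x => (t * c i) • x),
        if_pos (hp1 i), if_pos (hp2 i), smul_sub]
    have hw'sum : ∀ i, ∑ x ∈ s' i, w' i x = 1 := by
      intro i
      rw [hs'_def]
      rw [Finset.sum_filter_ne_zero]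
      simp only [hw'_def, Finset.sum_add_distrib, hsum i, hδsum i, add_zero]
    have hvec : ∀ i, ∑ x ∈ s' i, w' i x • x = ∑ x ∈ s i, w' i x • x := by
      intro i
      refine Finset.sum_subset (hs'sub i) ?_
      intro x hxs hxn
      have : w' i x = 0 := by
        by_contra h
        exact hxn (Finset.mem_filter.mpr ⟨hxs, h⟩)
      rw [this, zero_smul]
    have hxeq : ∑ i, ∑ x ∈ s' i, w' i x • x = ∑ i, ∑ x ∈ s i, w i x • x := by
      simp only [hvec]
      simp only [hw'_def, add_smul, Finset.sum_add_distrib, hδvec]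
      have : ∑ i, (t * c i) • (a i - b i) = 0 := by
        rw [← smul_zero t, ← hcsum, Finset.smul_sum]
        exact Finset.sum_congr rfl fun i _ => (mul_smul t (c i) _)
      rw [this, add_zero]
    -- measure decreases
    have hlt : ∑ i, (s' i).card < N := by
      rw [← hN]
      refine Finset.sum_lt_sum (fun i _ => Finset.card_le_card (hs'sub i)) ?_
      refine ⟨i₀, Finset.mem_univ _, ?_⟩
      refine Finset.card_lt_card ?_
      refine Finset.ssubset_iff_of_subset (hs'sub i₀) |>.mpr ?_
      exact ⟨y₀, hy₀s, fun h => (Finset.mem_filter.mp h).2 hy₀⟩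
    have hsub' : ∀ i, ↑(s' i) ⊆ A i := fun i =>
      Set.Subset.trans (Finset.coe_subset.mpr (hs'sub i)) (hsub i)
    obtain ⟨I, hI, hmem⟩ := IH _ hlt s' w' rfl hsub' hpos' hw'sum
    rw [hxeq] at hmem
    exact ⟨I, hI, hmem⟩

theorem shapley_folkman_classical {d n : ℕ} (A : Fin n → Set (EuclideanSpace ℝ (Fin d)))
    (hne : ∀ i, (A i).Nonempty) (hc : ∀ i, IsCompact (A i))
    (x : EuclideanSpace ℝ (Fin d)) (hx : x ∈ ∑ i, convexHull ℝ (A i)) :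
    ∃ I : Finset (Fin n), I.card ≤ d ∧
      x ∈ (∑ i ∈ Iᶜ, A i) + ∑ i ∈ I, convexHull ℝ (A i) := by
  classical
  obtain ⟨g, hg, hgsum⟩ := Set.mem_fintype_sum _ _ |>.mp hx
  have hfin : ∀ i, ∃ u : Finset (EuclideanSpace ℝ (Fin d)),
      ↑u ⊆ A i ∧ g i ∈ convexHull ℝ (u : Set (EuclideanSpace ℝ (Fin d))) := by
    intro i
    have := hg i
    rw [convexHull_eq_union_convexHull_finite_subsets] at this
    simpa using this
  choose u hu hgu using hfin
  have hw : ∀ i, ∃ w : EuclideanSpace ℝ (Fin d) → ℝ,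
      (∀ y ∈ u i, 0 ≤ w y) ∧ ∑ y ∈ u i, w y = 1 ∧ ∑ y ∈ u i, w y • y = g i := by
    intro i
    exact Finset.mem_convexHull'.mp (hgu i)
  choose w hw0 hw1 hwv using hw
  set s : Fin n → Finset (EuclideanSpace ℝ (Fin d)) :=
    fun i => (u i).filter (fun y => w i y ≠ 0) with hs_def
  have hssub : ∀ i, s i ⊆ u i := fun i => Finset.filter_subset _ _
  have hpos : ∀ i, ∀ y ∈ s i, 0 < w i y := by
    intro i y hy
    obtain ⟨hyu, hyne⟩ := Finset.mem_filter.mp hy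
    exact lt_of_le_of_ne (hw0 i y hyu) (Ne.symm hyne)
  have hsum : ∀ i, ∑ y ∈ s i, w i y = 1 := by
    intro i
    rw [hs_def, Finset.sum_filter_ne_zero]
    exact hw1 i
  have hvec : ∀ i, ∑ y ∈ s i, w i y • y = g i := by
    intro i
    rw [← hwv i]
    refine Finset.sum_subset (hssub i) ?_
    intro y hy hyn
    have : w i y = 0 := by
      by_contra h
      exact hyn (Finset.mem_filter.mpr ⟨hy, h⟩)
    rw [this, zero_smul]
  have hsubA : ∀ i, ↑(s i) ⊆ A i := fun i =>
    Set.Subset.trans (Finset.coe_subset.mpr (hssub i)) (hu i)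
  obtain ⟨I, hI, hmem⟩ := sf_key A (∑ i, (s i).card) s w rfl hsubA hpos hsum
  have : ∑ i, ∑ a ∈ s i, w i a • a = x := by
    rw [← hgsum]
    exact Finset.sum_congr rfl fun i _ => hvec i
  rw [this] at hmem
  exact ⟨I, hI, hmem⟩
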